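/- Let n ≥ k+1 with k ≥ 1, consider the k-nearest neighbor platoon P(n,k), and let S ⊆ {1,…,n} be a nonempty set of reference vehicles with F = {1,…,n} \ S nonempty; let L_g be the grounded Laplacian. Then: (i) (sufficiency) if 0 ≤ τ < π/(8k), then for every eigenvalue λ of L_g, every root s ∈ ℂ of s + λ·e^{−τs} = 0 satisfies Re s < 0; and (ii) (necessity) if τ > π/(2k), then there exist an eigenvalue λ of L_g and a root s ∈ ℂ of s + λ·e^{−τs} = 0 with Re s ≥ 0. In particular k ≤ λ_{|F|}(L_g) ≤ 4k. -/

import Mathlib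

open scoped Matrix

/-- The `k`-nearest neighbor platoon `P(n,k)`: the graph on `{1,…,n}` (modeled as `Fin n`)
in which distinct vertices `i, j` are adjacent iff `|i − j| ≤ k`. -/
def platoon (n k : ℕ) : SimpleGraph (Fin n) where
  Adj i j := i ≠ j ∧ ((i : ℤ) - (j : ℤ)).natAbs ≤ k
  symm := by
    constructor
    intro i j h
    exact ⟨h.1.symm, by omega⟩
  loopless := ⟨fun i h => h.1 rfl⟩

instance (n k : ℕ) : DecidableRel (platoon n k).Adj :=
  fun i j => inferInstanceAs (Decidable (i ≠ j ∧ ((i : ℤ) - (j : ℤ)).natAbs ≤ k))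

/-- The grounded Laplacian: the principal submatrix of the Laplacian of `G`
obtained by deleting the rows and columns indexed by the grounded set `S`. -/
noncomputable def groundedLaplacian {V : Type*} [Fintype V] [DecidableEq V]
    (G : SimpleGraph V) [DecidableRel G.Adj] (S : Finset V) :
    Matrix {v : V // v ∉ S} {v : V // v ∉ S} ℝ :=
  (G.lapMatrix ℝ).submatrix (fun i => (i : V)) (fun j => (j : V))

/-! ### Auxiliary analysis lemmas -/

lemma aux_stab (τ lam : ℝ) (hτ : 0 ≤ τ) (hl : 0 < lam) (h : τ * lam < Real.pi / 2)
    (s : ℂ) (hs : s + (lam : ℂ) * Complex.exp (-(τ : ℂ) * s) = 0) : s.re < 0 := by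
  by_contra hre
  push_neg at hre
  have h1 := congrArg Complex.re hs
  have h2 := congrArg Complex.im hs
  simp [Complex.exp_re, Complex.exp_im, Real.cos_neg, Real.sin_neg] at h1 h2
  set x := s.re with hx
  set y := s.im with hy
  have hE1 : Real.exp (-(τ * x)) ≤ 1 := Real.exp_le_one_iff.mpr (by nlinarith)
  have hE0 : 0 < Real.exp (-(τ * x)) := Real.exp_pos _
  have hsin : |Real.sin (τ * y)| ≤ 1 := Real.abs_sin_le_one _
  have hyb : |y| ≤ lam := by
    have hy2 : y = lam * (Real.exp (-(τ * x)) * Real.sin (τ * y)) := by linarith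
    rw [hy2, abs_mul, abs_mul, abs_of_pos hl, abs_of_pos hE0]
    nlinarith [mul_le_mul hE1 hsin (abs_nonneg (Real.sin (τ * y))) zero_le_one]
  have hτy : |τ * y| < Real.pi / 2 := by
    rw [abs_mul, abs_of_nonneg hτ]
    calc τ * |y| ≤ τ * lam := by nlinarith
    _ < Real.pi / 2 := h
  have hcos : 0 < Real.cos (τ * y) := by
    apply Real.cos_pos_of_mem_Ioo
    constructor
    · have := abs_lt.mp hτy; linarith [this.1]
    · exact (abs_lt.mp hτy).2
  nlinarith [mul_pos hl (mul_pos hE0 hcos)]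

lemma aux_unstab (τ lam : ℝ) (hl : 0 < lam) (h : Real.pi / 2 < τ * lam) :
    ∃ s : ℂ, s + (lam : ℂ) * Complex.exp (-(τ : ℂ) * s) = 0 ∧ 0 ≤ s.re := by
  have hπ := Real.pi_pos
  have hτ : 0 < τ := by nlinarith
  have hg : ContinuousOn (fun x : ℝ => x * Real.exp (τ * x)) (Set.Icc 0 lam) := by fun_prop
  have hmem : lam ∈ Set.Icc ((0:ℝ) * Real.exp (τ * 0)) (lam * Real.exp (τ * lam)) := by
    constructor
    · simp [hl.le]
    · nlinarith [Real.one_le_exp (by nlinarith : (0:ℝ) ≤ τ * lam)]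
  obtain ⟨x1, hx1mem, hx1⟩ := intermediate_value_Icc hl.le hg hmem
  simp only at hx1
  have hx1pos : 0 < x1 := by
    rcases lt_or_eq_of_le hx1mem.1 with h' | h'
    · exact h'
    · exfalso; rw [← h'] at hx1; simp at hx1; nlinarith
  have hmono : ∀ x ∈ Set.Icc (0:ℝ) x1, x * Real.exp (τ * x) ≤ lam := by
    intro x hx
    calc x * Real.exp (τ * x) ≤ x1 * Real.exp (τ * x1) := by
          apply mul_le_mul hx.2 (Real.exp_le_exp.mpr (by nlinarith [hx.2]))
            (Real.exp_pos _).le hx1mem.1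
    _ = lam := hx1
  set F : ℝ → ℝ := fun x =>
    lam * Real.exp (-(τ * x)) * Real.sin (Real.arccos (-(x * Real.exp (τ * x)) / lam))
      - Real.arccos (-(x * Real.exp (τ * x)) / lam) / τ with hF
  have hFcont : ContinuousOn F (Set.Icc 0 x1) := by
    apply ContinuousOn.sub
    · apply ContinuousOn.mul (by fun_prop)
      exact (Real.continuous_sin.comp (Real.continuous_arccos.comp (by fun_prop))).continuousOn
    · exact ((Real.continuous_arccos.comp (by fun_prop)).continuousOn).div_const τ
  have hF0 : 0 < F 0 := by
    simp only [hF]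
    norm_num [Real.arccos_zero, Real.sin_pi_div_two]
    rw [div_lt_iff₀ hτ] at *
    nlinarith [Real.sin_pi_div_two]
  have hFx1 : F x1 < 0 := by
    simp only [hF]
    have : -(x1 * Real.exp (τ * x1)) / lam = -1 := by rw [hx1]; field_simp
    rw [this, Real.arccos_neg_one, Real.sin_pi]
    simp
    positivity
  obtain ⟨x, hxmem, hxF⟩ := intermediate_value_Icc' hx1pos.le hFcont ⟨hFx1.le, hF0.le⟩
  set c : ℝ := -(x * Real.exp (τ * x)) / lam with hc
  set θ : ℝ := Real.arccos c with hθ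
  have hc1 : -1 ≤ c := by
    rw [hc, neg_div, neg_le, neg_neg, div_le_one hl]
    exact hmono x hxmem
  have hc0 : c ≤ 0 := by
    rw [hc]
    apply div_nonpos_of_nonpos_of_nonneg _ hl.le
    simp only [neg_nonpos]
    exact mul_nonneg hxmem.1 (Real.exp_pos _).le
  have hcosθ : Real.cos θ = c := Real.cos_arccos hc1 (hc0.trans zero_le_one)
  have hsinθ : 0 ≤ Real.sin θ :=
    Real.sin_nonneg_of_nonneg_of_le_pi (Real.arccos_nonneg c) (Real.arccos_le_pi c)
  refine ⟨⟨x, θ / τ⟩, ?_, hxmem.1⟩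
  have him : lam * Real.exp (-(τ * x)) * Real.sin θ = θ / τ := by
    have := hxF
    simp only [hF] at this
    linarith
  apply Complex.ext
  · simp [Complex.exp_re, Real.cos_neg, mul_div_cancel₀ θ hτ.ne']
    rw [hcosθ, hc]
    field_simp
    have he : Real.exp (-(τ * x)) * Real.exp (τ * x) = 1 := by
      rw [← Real.exp_add]; simp
    have h3 : lam * (Real.exp (-(τ * x)) * (x * Real.exp (τ * x)))
        = x * lam * (Real.exp (-(τ * x)) * Real.exp (τ * x)) := by ring
    rw [he, mul_one] at h3
    have he2 : Real.exp (-(x * τ)) * Real.exp (x * τ) = 1 := by rw [← Real.exp_add]; simp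
    rw [he2]; ring
  · simp [Complex.exp_im, Real.sin_neg, mul_div_cancel₀ θ hτ.ne']
    linarith

/-! ### Auxiliary linear algebra lemmas -/

lemma aux_spec_exists {m : Type*} [Fintype m] [DecidableEq m] {M : Matrix m m ℝ} {l : ℝ}
    (hl : l ∈ spectrum ℝ M) : ∃ v : m → ℝ, v ≠ 0 ∧ M *ᵥ v = l • v := by
  rw [spectrum.mem_iff, Algebra.algebraMap_eq_smul_one] at hl
  rw [Matrix.isUnit_iff_isUnit_det, isUnit_iff_ne_zero, not_ne_iff] at hl
  obtain ⟨v, hv0, hv⟩ := (Matrix.exists_mulVec_eq_zero_iff).mpr hl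
  refine ⟨v, hv0, ?_⟩
  rw [Matrix.sub_mulVec, Matrix.smul_mulVec, Matrix.one_mulVec, sub_eq_zero] at hv
  exact hv.symm

lemma aux_trace_eq_sum_eigenvalues {m : Type*} [Fintype m] [DecidableEq m] {M : Matrix m m ℝ}
    (hM : M.IsHermitian) : M.trace = ∑ i, hM.eigenvalues i := by
  rw [hM.trace_eq_sum_eigenvalues]
  simp

section Extension
variable {V : Type*} [Fintype V] [DecidableEq V]
  (G : SimpleGraph V) [DecidableRel G.Adj] (S : Finset V)

/-- extension by zero of a vector on the followers -/
noncomputable def extz (S : Finset V) (v : {v : V // v ∉ S} → ℝ) : V → ℝ :=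
  fun w => if h : w ∈ S then 0 else v ⟨w, h⟩

lemma extz_dotProduct (v : {v : V // v ∉ S} → ℝ) (f : V → ℝ) :
    (extz S v) ⬝ᵥ f = v ⬝ᵥ (fun j => f ↑j) := by
  unfold dotProduct
  calc ∑ i : V, extz S v i * f i
      = ∑ w ∈ Sᶜ, extz S v w * f w := by
        refine (Finset.sum_subset (Finset.subset_univ Sᶜ) ?_).symm
        intro w _ hw
        simp only [Finset.mem_compl, not_not] at hw
        simp [extz, hw]
    _ = ∑ i : {v : V // v ∉ S}, extz S v ↑i * f ↑i :=
        Finset.sum_subtype Sᶜ (by simp) _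
    _ = ∑ i : {v : V // v ∉ S}, v i * f ↑i := by
        refine Finset.sum_congr rfl fun i _ => ?_
        simp [extz, i.2]

lemma extz_apply_coe (v : {v : V // v ∉ S} → ℝ) (j : {v : V // v ∉ S}) :
    extz S v ↑j = v j := by simp [extz, j.2]

lemma grounded_mulVec (v : {v : V // v ∉ S} → ℝ) (i : {v : V // v ∉ S}) :
    ((G.lapMatrix ℝ) *ᵥ (extz S v)) ↑i = ((groundedLaplacian G S) *ᵥ v) i := by
  unfold Matrix.mulVec
  show (G.lapMatrix ℝ) ↑i ⬝ᵥ (extz S v) = _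
  rw [dotProduct_comm, extz_dotProduct]
  rw [dotProduct_comm]
  rfl

lemma grounded_form (v : {v : V // v ∉ S} → ℝ) :
    (extz S v) ⬝ᵥ ((G.lapMatrix ℝ) *ᵥ (extz S v)) = v ⬝ᵥ ((groundedLaplacian G S) *ᵥ v) := by
  rw [extz_dotProduct]
  congr 1
  funext j
  exact grounded_mulVec G S v j

end Extension

/-! ### Degree bounds and connectivity for the platoon -/

lemma platoon_deg_le (n k : ℕ) (i : Fin n) : (platoon n k).degree i ≤ 2 * k := by
  classical
  rw [← SimpleGraph.card_neighborFinset_eq_degree]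
  have : ((Finset.Icc (-(k:ℤ)) (k:ℤ)).erase 0).card = 2 * k := by
    rw [Finset.card_erase_of_mem (by simp), Int.card_Icc]
    omega
  rw [← this]
  refine Finset.card_le_card_of_injOn (fun v => (v : ℤ) - (i : ℤ)) ?_ ?_
  · intro v hv
    rw [Finset.mem_coe, SimpleGraph.mem_neighborFinset] at hv
    obtain ⟨hne, hd⟩ := hv
    have : (i : ℕ) ≠ (v : ℕ) := fun h => hne (Fin.ext h)
    simp only [Finset.mem_coe, Finset.mem_erase, Finset.mem_Icc]
    omega
  · intro a _ b _ hab
    simp only at hab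
    exact Fin.ext (by omega)

lemma platoon_deg_ge (n k : ℕ) (hk : 1 ≤ k) (hn : k + 1 ≤ n) (i : Fin n) :
    k ≤ (platoon n k).degree i := by
  classical
  rw [← SimpleGraph.card_neighborFinset_eq_degree]
  have hi : (i : ℕ) < n := i.isLt
  set a : Fin n := ⟨(i : ℕ) - k, by omega⟩ with ha
  set b : Fin n := ⟨min (n - 1) ((i : ℕ) + k), by omega⟩ with hb
  have hsub : (Finset.Icc a b).erase i ⊆ (platoon n k).neighborFinset i := by
    intro v hv
    rw [Finset.mem_erase, Finset.mem_Icc] at hv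
    obtain ⟨hne, h1, h2⟩ := hv
    rw [SimpleGraph.mem_neighborFinset]
    have h1' : (a : ℕ) ≤ (v : ℕ) := h1
    have h2' : (v : ℕ) ≤ (b : ℕ) := h2
    refine ⟨fun h => hne (h.symm), ?_⟩
    simp only [ha, hb] at h1' h2'
    omega
  have hav : (a : ℕ) = (i : ℕ) - k := rfl
  have hbv : (b : ℕ) = min (n - 1) ((i : ℕ) + k) := rfl
  have hmem : i ∈ Finset.Icc a b := by
    rw [Finset.mem_Icc, Fin.le_def, Fin.le_def, hav, hbv]
    omega
  have hcard : ((Finset.Icc a b).erase i).card = (b : ℕ) + 1 - (a : ℕ) - 1 := by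
    rw [Finset.card_erase_of_mem hmem, Fin.card_Icc]
  calc k ≤ ((Finset.Icc a b).erase i).card := by rw [hcard, hav, hbv]; omega
  _ ≤ _ := Finset.card_le_card hsub

lemma platoon_connected_aux (n k : ℕ) (hk : 1 ≤ k) (x : Fin n → ℝ)
    (h : ∀ i j, (platoon n k).Adj i j → x i = x j) : ∀ i j, x i = x j := by
  suffices H : ∀ d (i j : Fin n), ((i : ℤ) - (j : ℤ)).natAbs = d → x i = x j by
    exact fun i j => H _ i j rfl
  intro d
  induction d with
  | zero => intro i j hij; have : i = j := Fin.ext (by omega); rw [this]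
  | succ d ih =>
    intro i j hij
    rcases lt_trichotomy (i : ℕ) (j : ℕ) with h1 | h1 | h1
    · have hj : (i : ℕ) + 1 < n := by omega
      set i' : Fin n := ⟨(i : ℕ) + 1, hj⟩ with hi'
      have hadj : (platoon n k).Adj i i' := by
        refine ⟨fun e => ?_, ?_⟩
        · have := congrArg Fin.val e; simp [hi'] at this
        · show (((i : ℕ) : ℤ) - (((i : ℕ) + 1 : ℕ) : ℤ)).natAbs ≤ k; push_cast; omega
      rw [h i i' hadj]
      exact ih i' j (by show ((((i : ℕ) + 1 : ℕ) : ℤ) - _).natAbs = d; push_cast; omega)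
    · omega
    · have hj : 1 ≤ (i : ℕ) := by omega
      set i' : Fin n := ⟨(i : ℕ) - 1, by omega⟩ with hi'
      have hadj : (platoon n k).Adj i i' := by
        refine ⟨fun e => ?_, ?_⟩
        · have := congrArg Fin.val e; simp [hi'] at this; omega
        · show (((i : ℕ) : ℤ) - (((i : ℕ) - 1 : ℕ) : ℤ)).natAbs ≤ k; omega
      rw [h i i' hadj]
      exact ih i' j (by show ((((i : ℕ) - 1 : ℕ) : ℤ) - _).natAbs = d; omega)

/-! ### Main theorem -/

/-- for the platoon `P(n,k)` with grounded Laplacian `L_g`: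
(i) if `0 ≤ τ < π/(8k)` then for each eigenvalue `λ` of `L_g`, every root `s` of
`s + λ·e^{−τs} = 0` has `Re s < 0` (delayed velocity tracking is asymptotically stable);
(ii) if `τ > π/(2k)` then some eigenvalue `λ` of `L_g` admits a root `s` of
`s + λ·e^{−τs} = 0` with `Re s ≥ 0` (instability).
In particular `k ≤ λ_{|F|}(L_g) ≤ 4k`. -/
theorem platoon_delay_stability (n k : ℕ) (hk : 1 ≤ k) (hn : k + 1 ≤ n)
    (S : Finset (Fin n)) (hS : S.Nonempty) (hF : Sᶜ.Nonempty) :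
    (∀ τ : ℝ, 0 ≤ τ → τ < Real.pi / (8 * k) →
      ∀ l ∈ spectrum ℝ (groundedLaplacian (platoon n k) S),
        ∀ s : ℂ, s + (l : ℂ) * Complex.exp (-(τ : ℂ) * s) = 0 → s.re < 0) ∧
    (∀ τ : ℝ, Real.pi / (2 * k) < τ →
      ∃ l ∈ spectrum ℝ (groundedLaplacian (platoon n k) S),
        ∃ s : ℂ, s + (l : ℂ) * Complex.exp (-(τ : ℂ) * s) = 0 ∧ 0 ≤ s.re) ∧
    ((∀ l ∈ spectrum ℝ (groundedLaplacian (platoon n k) S), l ≤ 4 * k) ∧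
      (∃ l ∈ spectrum ℝ (groundedLaplacian (platoon n k) S), (k : ℝ) ≤ l)) := by
  classical
  have hπ := Real.pi_pos
  have hk0 : (0:ℝ) < k := by exact_mod_cast hk
  obtain ⟨f, hf⟩ := hF
  have hfS : f ∉ S := Finset.mem_compl.mp hf
  haveI hne : Nonempty {v : Fin n // v ∉ S} := ⟨⟨f, hfS⟩⟩
  set M := groundedLaplacian (platoon n k) S with hM
  have hPSD : M.PosSemidef := (SimpleGraph.posSemidef_lapMatrix ℝ (platoon n k)).submatrix _
  have hdiag : ∀ i : {v : Fin n // v ∉ S}, M i i = (((platoon n k).degree (↑i : Fin n) : ℕ) : ℝ) := by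
    intro i
    simp [hM, groundedLaplacian, SimpleGraph.lapMatrix, SimpleGraph.degMatrix]
  -- upper bound via Gershgorin
  have hub : ∀ l ∈ spectrum ℝ M, l ≤ 4 * (k : ℝ) := by
    intro l hl
    obtain ⟨v, hv0, hMv⟩ := aux_spec_exists hl
    have hEig : Module.End.HasEigenvalue (Matrix.toLin' M) l :=
      Module.End.hasEigenvalue_of_hasEigenvector
        ⟨Module.End.mem_eigenspace_iff.mpr (by rw [Matrix.toLin'_apply, hMv]), hv0⟩
    obtain ⟨i, hi⟩ := eigenvalue_mem_ball hEig
    rw [Metric.mem_closedBall, Real.dist_eq] at hi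
    have hsum : ∑ j ∈ Finset.univ.erase i, ‖M i j‖
        ≤ (((platoon n k).degree (↑i : Fin n) : ℕ) : ℝ) := by
      have hterm : ∀ j ∈ Finset.univ.erase i,
          ‖M i j‖ = if (platoon n k).Adj ↑i ↑j then (1:ℝ) else 0 := by
        intro j hj
        have hne' : (↑i : Fin n) ≠ ↑j := by
          intro e
          exact (Finset.mem_erase.mp hj).1 (Subtype.ext e.symm)
        by_cases hadj : (platoon n k).Adj ↑i ↑j <;>
          simp [hM, groundedLaplacian, SimpleGraph.lapMatrix, SimpleGraph.degMatrix, hne', hadj]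
      rw [Finset.sum_congr rfl hterm, Finset.sum_boole]
      have hcard : ((Finset.univ.erase i).filter
          (fun j : {v : Fin n // v ∉ S} => (platoon n k).Adj ↑i ↑j)).card
          ≤ (platoon n k).degree (↑i : Fin n) := by
        rw [← SimpleGraph.card_neighborFinset_eq_degree]
        refine Finset.card_le_card_of_injOn (fun j => (↑j : Fin n)) ?_ ?_
        · intro j hj
          rw [Finset.mem_coe, SimpleGraph.mem_neighborFinset]
          exact (Finset.mem_filter.mp hj).2
        · intro a _ b _ hab
          exact Subtype.ext hab
      exact_mod_cast hcard
    have hd2 : (((platoon n k).degree (↑i : Fin n) : ℕ) : ℝ) ≤ 2 * k := by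
      exact_mod_cast platoon_deg_le n k ↑i
    have := abs_le.mp hi
    rw [hdiag i] at this
    linarith [this.2]
  -- positivity
  have hpos : ∀ l ∈ spectrum ℝ M, 0 < l := by
    intro l hl
    obtain ⟨v, hv0, hMv⟩ := aux_spec_exists hl
    have hq : 0 ≤ v ⬝ᵥ (M *ᵥ v) := by
      have := hPSD.dotProduct_mulVec_nonneg v
      simpa using this
    have hvv : 0 < v ⬝ᵥ v := by
      refine lt_of_le_of_ne (Finset.sum_nonneg fun i _ => mul_self_nonneg _) ?_
      intro h
      exact hv0 (dotProduct_self_eq_zero.mp h.symm)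
    have hl0 : 0 ≤ l := by
      rw [hMv, dotProduct_smul, smul_eq_mul] at hq
      nlinarith
    rcases hl0.lt_or_eq with h' | h'
    · exact h'
    exfalso
    have hMv0 : M *ᵥ v = 0 := by rw [hMv, ← h', zero_smul]
    have hform : Matrix.toLinearMap₂' ℝ ((platoon n k).lapMatrix ℝ) (extz S v) (extz S v) = 0 := by
      rw [Matrix.toLinearMap₂'_apply', grounded_form (platoon n k) S v, ← hM, hMv0]
      simp
    have hadj := (SimpleGraph.lapMatrix_toLinearMap₂'_apply'_eq_zero_iff_forall_adj
      (R := ℝ) (platoon n k) (extz S v)).mp hform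
    have hconst := platoon_connected_aux n k hk (extz S v) hadj
    obtain ⟨s0, hs0⟩ := hS
    apply hv0
    funext j
    have h1 := hconst ↑j s0
    rw [extz_apply_coe] at h1
    have h2 : extz S v s0 = 0 := by simp [extz, hs0]
    rw [h2] at h1
    exact h1
  -- existence of a large eigenvalue
  have hHerm : M.IsHermitian := hPSD.1
  have hex : ∃ l ∈ spectrum ℝ M, (k : ℝ) ≤ l := by
    by_contra hno
    push_neg at hno
    have hall : ∀ i, hHerm.eigenvalues i < k := fun i =>
      hno _ (hHerm.eigenvalues_mem_spectrum_real i)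
    have htr : M.trace = ∑ i : {v : Fin n // v ∉ S},
        (((platoon n k).degree (↑i : Fin n) : ℕ) : ℝ) := by
      unfold Matrix.trace
      exact Finset.sum_congr rfl fun i _ => hdiag i
    have h1 : M.trace < (k : ℝ) * Fintype.card {v : Fin n // v ∉ S} := by
      rw [aux_trace_eq_sum_eigenvalues hHerm]
      calc ∑ i, hHerm.eigenvalues i < ∑ _i : {v : Fin n // v ∉ S}, (k : ℝ) :=
            Finset.sum_lt_sum_of_nonempty Finset.univ_nonempty (fun i _ => hall i)
      _ = (k : ℝ) * Fintype.card {v : Fin n // v ∉ S} := by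
            rw [Finset.sum_const, Finset.card_univ, nsmul_eq_mul, mul_comm]
    have h2 : (k : ℝ) * Fintype.card {v : Fin n // v ∉ S} ≤ M.trace := by
      rw [htr]
      calc (k : ℝ) * Fintype.card {v : Fin n // v ∉ S}
          = ∑ _i : {v : Fin n // v ∉ S}, (k : ℝ) := by
            rw [Finset.sum_const, Finset.card_univ, nsmul_eq_mul, mul_comm]
      _ ≤ _ := by
            refine Finset.sum_le_sum fun i _ => ?_
            exact_mod_cast platoon_deg_ge n k hk hn ↑i
    linarith
  refine ⟨?_, ?_, fun l hl => hub l hl, hex⟩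
  · intro τ hτ0 hτlt l hl s hs
    refine aux_stab τ l hτ0 (hpos l hl) ?_ s hs
    have h4k : (0:ℝ) < 4 * k := by positivity
    have e1 : τ * l ≤ τ * (4 * k) := mul_le_mul_of_nonneg_left (hub l hl) hτ0
    have e2 : τ * (4 * k) < Real.pi / (8 * k) * (4 * k) :=
      mul_lt_mul_of_pos_right hτlt h4k
    have e3 : Real.pi / (8 * k) * (4 * k) = Real.pi / 2 := by
      field_simp
      ring
    linarith
  · intro τ hτ
    obtain ⟨l, hl, hkl⟩ := hex
    refine ⟨l, hl, ?_⟩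
    refine aux_unstab τ l (hpos l hl) ?_
    have hτpos : 0 < τ := lt_trans (by positivity) hτ
    have e1 : Real.pi / (2 * k) * k < τ * k := mul_lt_mul_of_pos_right hτ hk0
    have e2 : Real.pi / (2 * k) * k = Real.pi / 2 := by
      field_simp
    have e3 : τ * k ≤ τ * l := mul_le_mul_of_nonneg_left hkl hτpos.le
    linarith
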